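/- Let L, M : Fin r → Mat_N(k) be two pencils of commuting endomorphisms of the same size N. Assume that for every u ∈ k^r the characteristic polynomials of Σ_i u_i · L_i and Σ_i u_i · M_i coincide, and that for some u₀ ∈ k^r the characteristic polynomial of Σ_i (u₀)_i · L_i is separable (has N distinct roots), i.e., the pencil L has simple spectrum. Then the pencils are conjugate: there exists an invertible matrix P ∈ GL_N(k) with P · L_i · P⁻¹ = M_i for every i ∈ Fin r. -/

import Mathlib

open Matrix Polynomial

section Aux

variable {k : Type} [Field k] {N r : ℕ}

lemma aux_charpoly_diagonal (d : Fin N → k) :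
    (Matrix.diagonal d).charpoly = ∏ j, (X - C (d j)) := by
  have h : charmatrix (Matrix.diagonal d) = Matrix.diagonal fun j => (X : k[X]) - C (d j) := by
    ext i j
    by_cases hij : i = j
    · subst hij; simp
    · rw [charmatrix_apply_ne _ _ _ hij, Matrix.diagonal_apply_ne _ hij,
        Matrix.diagonal_apply_ne _ hij, map_zero, neg_zero]
  rw [Matrix.charpoly, h, Matrix.det_diagonal]

lemma aux_charpoly_similar {A B V : Matrix (Fin N) (Fin N) k} (hV : IsUnit V.det)
    (h : B * V = V * A) : B.charpoly = A.charpoly := by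
  classical
  have hcm : ∀ (M : Matrix (Fin N) (Fin N) k),
      charmatrix M = Matrix.scalar (Fin N) (X : k[X]) - M.map C := fun M => by
    rw [charmatrix, RingHom.mapMatrix_apply]
  have h1 : (Matrix.scalar (Fin N) (X : k[X])) * V.map C
      = V.map C * Matrix.scalar (Fin N) (X : k[X]) :=
    (Matrix.scalar_commute (X : k[X]) (fun r' => Commute.all _ _) (V.map C)).eq
  have key : charmatrix B * V.map C = V.map C * charmatrix A := by
    rw [hcm, hcm, sub_mul, mul_sub, h1, ← Matrix.map_mul, h, Matrix.map_mul]
  have hdet := congrArg Matrix.det key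
  rw [Matrix.det_mul, Matrix.det_mul, mul_comm] at hdet
  have hC : ((V.map C).det) ≠ 0 := by
    have h7 : (V.map C).det = C V.det := by
      rw [← RingHom.mapMatrix_apply, ← RingHom.map_det]
    rw [h7]
    exact Polynomial.C_ne_zero.mpr hV.ne_zero
  rw [Matrix.charpoly, Matrix.charpoly]
  exact mul_left_cancel₀ hC hdet

lemma aux_exists_eigenvector {A : Matrix (Fin N) (Fin N) k} {μ : k}
    (h : A.charpoly.IsRoot μ) : ∃ v, v ≠ 0 ∧ A.mulVec v = μ • v := by
  classical
  have hdet : (μ • (1 : Matrix (Fin N) (Fin N) k) - A).det = 0 := by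
    have hmap : (charmatrix A).map (Polynomial.eval μ)
        = μ • (1 : Matrix (Fin N) (Fin N) k) - A := by
      ext i j
      by_cases hij : i = j
      · subst hij
        simp [Matrix.one_apply, Matrix.smul_apply]
      · rw [Matrix.map_apply, charmatrix_apply_ne _ _ _ hij]
        simp [Matrix.one_apply_ne hij]
    have h2 : Polynomial.eval μ (charmatrix A).det
        = ((charmatrix A).map (Polynomial.eval μ)).det := by
      have h3 := RingHom.map_det (Polynomial.evalRingHom μ) (charmatrix A)
      simpa [Polynomial.coe_evalRingHom] using h3
    rw [hmap] at h2
    rw [← h2]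
    exact h
  obtain ⟨v, hv0, hv⟩ := Matrix.exists_mulVec_eq_zero_iff.mpr hdet
  refine ⟨v, hv0, ?_⟩
  rw [Matrix.sub_mulVec, Matrix.smul_mulVec, Matrix.one_mulVec, sub_eq_zero] at hv
  exact hv.symm

lemma aux_sum_smul_mulVec (u : Fin r → k) (L : Fin r → Matrix (Fin N) (Fin N) k)
    (x : Fin N → k) :
    (∑ i, u i • L i).mulVec x = ∑ i, u i • (L i).mulVec x := by
  ext p
  simp only [Matrix.mulVec, dotProduct, Matrix.sum_apply, Matrix.smul_apply,
    Finset.sum_apply, Pi.smul_apply, smul_eq_mul, Finset.sum_mul, Finset.mul_sum]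
  rw [Finset.sum_comm]
  exact Finset.sum_congr rfl fun _ _ => Finset.sum_congr rfl fun _ _ => mul_assoc _ _ _

lemma aux_pencil_diag (hN : 0 < N) (L : Fin r → Matrix (Fin N) (Fin N) k)
    (hL : ∀ i j, L i * L j = L j * L i) (u₀ : Fin r → k)
    (lam : Fin N → k) (hinj : Function.Injective lam)
    (hroot : ∀ j, ∃ v, v ≠ 0 ∧ (∑ i, u₀ i • L i).mulVec v = lam j • v) :
    ∃ (V : Matrix (Fin N) (Fin N) k) (c : Fin r → Fin N → k),
      IsUnit V.det ∧ (∀ i, L i * V = V * Matrix.diagonal (c i)) ∧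
      (∀ j, ∑ i, u₀ i * c i j = lam j) := by
  classical
  haveI : Nonempty (Fin N) := ⟨⟨0, hN⟩⟩
  set A := ∑ i, u₀ i • L i with hA
  choose v hv0 hveq using hroot
  have heig : ∀ j, Module.End.HasEigenvector (Matrix.mulVecLin A) (lam j) (v j) := fun j =>
    ⟨Module.End.mem_eigenspace_iff.mpr (by simpa [Matrix.mulVecLin_apply] using hveq j), hv0 j⟩
  have hli : LinearIndependent k v :=
    Module.End.eigenvectors_linearIndependent' (Matrix.mulVecLin A) lam hinj v heig
  have hcard : Fintype.card (Fin N) = Module.finrank k (Fin N → k) := by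
    simp [Module.finrank_fintype_fun_eq_card]
  let b : Module.Basis (Fin N) k (Fin N → k) := basisOfLinearIndependentOfCardEqFinrank hli hcard
  have hbv : ⇑b = v := coe_basisOfLinearIndependentOfCardEqFinrank hli hcard
  have hrepr : ∀ (t : Fin N → k), ⇑(b.repr (∑ m, t m • v m)) = t := by
    intro t
    have h1 : (∑ m, t m • v m) = ∑ m, t m • b m :=
      Finset.sum_congr rfl fun m _ => by rw [hbv]
    rw [h1, Module.Basis.repr_sum_self]
  have hspan : ∀ (j : Fin N) (x : Fin N → k),
      A.mulVec x = lam j • x → x = b.repr x j • v j := by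
    intro j x hx
    set a : Fin N → k := fun m => b.repr x m with ha
    have hx1 : x = ∑ m, a m • v m := by
      conv_lhs => rw [← b.sum_repr x]
      exact Finset.sum_congr rfl fun m _ => by rw [hbv]
    have hAx : A.mulVec x = ∑ m, (a m * lam m) • v m := by
      conv_lhs => rw [hx1]
      have h4 : A.mulVec (∑ m, a m • v m) = ∑ m, a m • A.mulVec (v m) := by
        show A.mulVecLin (∑ m, a m • v m) = ∑ m, a m • A.mulVecLin (v m)
        rw [map_sum]
        exact Finset.sum_congr rfl fun m _ => A.mulVecLin.map_smul (a m) (v m)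
      rw [h4]
      exact Finset.sum_congr rfl fun m _ => by rw [hveq m, smul_smul]
    have hlx : lam j • x = ∑ m, (lam j * a m) • v m := by
      conv_lhs => rw [hx1]
      rw [Finset.smul_sum]
      exact Finset.sum_congr rfl fun m _ => by rw [smul_smul]
    have hsum : (∑ m, (a m * lam m) • v m) = ∑ m, (lam j * a m) • v m := by
      rw [← hAx, ← hlx, hx]
    have hco : ∀ m, a m * lam m = lam j * a m := by
      intro m
      have e3 : (b.repr (∑ m', (a m' * lam m') • v m')) m = a m * lam m :=
        congrFun (hrepr fun m' => a m' * lam m') m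
      have e4 : (b.repr (∑ m', (lam j * a m') • v m')) m = lam j * a m :=
        congrFun (hrepr fun m' => lam j * a m') m
      rw [← e3, ← e4, hsum]
    have hzero : ∀ m, m ≠ j → a m = 0 := by
      intro m hm
      by_contra hz
      have h5 : a m * lam m = a m * lam j := by rw [hco m, mul_comm]
      exact hm (hinj (mul_left_cancel₀ hz h5))
    have h8 : x = a j • v j := by
      rw [hx1]
      exact Finset.sum_eq_single j (fun m _ hm => by rw [hzero m hm, zero_smul])
        (fun h => absurd (Finset.mem_univ j) h)
    exact h8
  have hcomm : ∀ i, A * L i = L i * A := by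
    intro i
    rw [hA, Finset.sum_mul, Finset.mul_sum]
    exact Finset.sum_congr rfl fun m _ => by
      rw [Matrix.smul_mul, hL m i, ← Matrix.mul_smul]
  have hLv : ∀ i j, A.mulVec ((L i).mulVec (v j)) = lam j • (L i).mulVec (v j) := by
    intro i j
    rw [Matrix.mulVec_mulVec, hcomm i, ← Matrix.mulVec_mulVec, hveq j, Matrix.mulVec_smul]
  set c : Fin r → Fin N → k := fun i j => b.repr ((L i).mulVec (v j)) j with hc
  have hLc : ∀ i j, (L i).mulVec (v j) = c i j • v j := fun i j =>
    hspan j _ (hLv i j)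
  set V : Matrix (Fin N) (Fin N) k := Matrix.of fun p q => v q p with hVdef
  have hVe : V = (Pi.basisFun k (Fin N)).toMatrix ⇑b := by
    ext p q
    rw [Module.Basis.toMatrix_apply, hbv]
    simp [Pi.basisFun_repr, hVdef]
  refine ⟨V, c, ?_, ?_, ?_⟩
  · rw [hVe]
    have := (Pi.basisFun k (Fin N)).invertibleToMatrix b
    exact Matrix.isUnit_det_of_invertible _
  · intro i
    ext p q
    have h1 : (L i * V) p q = ((L i).mulVec (v q)) p := by
      simp [Matrix.mul_apply, Matrix.mulVec, dotProduct, hVdef]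
    rw [h1, hLc i q, Matrix.mul_diagonal]
    simp [hVdef, mul_comm]
  · intro j
    have h1 : A.mulVec (v j) = (∑ i, u₀ i * c i j) • v j := by
      rw [hA, aux_sum_smul_mulVec]
      have h2 : ∀ i, u₀ i • (L i).mulVec (v j) = (u₀ i * c i j) • v j := fun i => by
        rw [hLc i j, smul_smul]
      rw [Finset.sum_congr rfl fun i _ => h2 i, ← Finset.sum_smul]
    have h3 : (∑ i, u₀ i * c i j) • v j = lam j • v j := by
      rw [← h1, hveq j]
    have h4 : (∑ i, u₀ i * c i j - lam j) • v j = 0 := by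
      rw [sub_smul, h3, sub_self]
    rcases smul_eq_zero.mp h4 with h | h
    · exact sub_eq_zero.mp h
    · exact absurd h (hv0 j)

lemma aux_compare [Infinite k] (u₀ : Fin r → k) (lam : Fin N → k)
    (hinj : Function.Injective lam) (c d : Fin r → Fin N → k)
    (hc : ∀ j, ∑ i, u₀ i * c i j = lam j) (hd : ∀ j, ∑ i, u₀ i * d i j = lam j)
    (hcd : ∀ u : Fin r → k,
      (∏ j, (X - C (∑ i, u i * c i j))) = ∏ j, (X - C (∑ i, u i * d i j))) :
    c = d := by
  classical
  funext i j
  have key : ∀ t : k, ∃ j', lam j + t * c i j = lam j' + t * d i j' := by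
    intro t
    set u : Fin r → k := fun m => u₀ m + (if m = i then t else 0) with hu
    have hsum : ∀ (e : Fin r → Fin N → k), (∀ j'', ∑ m, u₀ m * e m j'' = lam j'') →
        ∀ j'' : Fin N, ∑ m, u m * e m j'' = lam j'' + t * e i j'' := by
      intro e hval j''
      have h1 : ∀ m, u m * e m j''
          = u₀ m * e m j'' + (if m = i then t * e i j'' else 0) := by
        intro m
        rcases eq_or_ne m i with h | h
        · subst h
          simp only [hu]
          split_ifs with hh
          · ring
          · exact absurd trivial hh
        · simp only [hu, if_neg h, add_zero]
      rw [Finset.sum_congr rfl fun m _ => h1 m, Finset.sum_add_distrib,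
        Finset.sum_ite_eq' Finset.univ i fun _ => t * e i j'', hval j'']
      simp
    have h := hcd u
    have hpc : (∏ j'', ((X : k[X]) - C (∑ m, u m * c m j'')))
        = ∏ j'', ((X : k[X]) - C (lam j'' + t * c i j'')) :=
      Finset.prod_congr rfl fun j'' _ => by rw [hsum c hc j'']
    have hpd : (∏ j'', ((X : k[X]) - C (∑ m, u m * d m j'')))
        = ∏ j'', ((X : k[X]) - C (lam j'' + t * d i j'')) :=
      Finset.prod_congr rfl fun j'' _ => by rw [hsum d hd j'']
    rw [hpc, hpd] at h
    have hzero : Polynomial.eval (lam j + t * c i j)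
        (∏ j', ((X : k[X]) - C (lam j' + t * c i j'))) = 0 := by
      rw [Polynomial.eval_prod]
      refine Finset.prod_eq_zero (Finset.mem_univ j) ?_
      simp
    rw [h, Polynomial.eval_prod] at hzero
    obtain ⟨j', _, hj'⟩ := Finset.prod_eq_zero_iff.mp hzero
    refine ⟨j', ?_⟩
    simpa [sub_eq_zero] using hj'
  choose F hF using key
  obtain ⟨t₁, t₂, hne, hFeq⟩ := Finite.exists_ne_map_eq_of_infinite F
  have e1 := hF t₁
  have e2 := hF t₂
  rw [hFeq] at e1
  have hsub : (t₁ - t₂) * c i j = (t₁ - t₂) * d i (F t₂) := by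
    linear_combination e1 - e2
  have hc' : c i j = d i (F t₂) := mul_left_cancel₀ (sub_ne_zero.mpr hne) hsub
  have hlam : lam j = lam (F t₂) := by linear_combination e1 - t₁ * hc'
  rw [hc', hinj hlam]

end Aux

/-- Two isospectral pencils of commuting endomorphisms of the same size, one of which
has simple spectrum (some linear combination has separable characteristic polynomial),
are conjugate. -/
theorem pencil_conjugate_of_charpoly_eq_of_simple_spectrum
    {k : Type} [Field k] [IsAlgClosed k] {r N : ℕ} (hr : 1 ≤ r)
    (L M : Fin r → Matrix (Fin N) (Fin N) k)
    (hL : ∀ i j, L i * L j = L j * L i) (hM : ∀ i j, M i * M j = M j * M i)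
    (hiso : ∀ u : Fin r → k, (∑ i, u i • L i).charpoly = (∑ i, u i • M i).charpoly)
    (u₀ : Fin r → k) (hsep : (∑ i, u₀ i • L i).charpoly.Separable) :
    ∃ P : Matrix (Fin N) (Fin N) k, IsUnit P ∧ ∀ i, P * L i * P⁻¹ = M i := by
  classical
  rcases Nat.eq_zero_or_pos N with hN | hN
  · subst hN
    exact ⟨1, isUnit_one, fun i => by ext p q; exact p.elim0⟩
  have hchar : (∑ i, u₀ i • L i).charpoly = (∑ i, u₀ i • M i).charpoly := hiso u₀
  have hdegA : (∑ i, u₀ i • L i).charpoly.natDegree = N := by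
    rw [Matrix.charpoly_natDegree_eq_dim, Fintype.card_fin]
  have hsplit : (∑ i, u₀ i • L i).charpoly.Splits :=
    IsAlgClosed.splits _
  have hroots_card : Multiset.card (∑ i, u₀ i • L i).charpoly.roots = N := by
    have h := Polynomial.Splits.natDegree_eq_card_roots hsplit
    rw [← h, hdegA]
  have hnodup : (∑ i, u₀ i • L i).charpoly.roots.Nodup := Polynomial.nodup_roots hsep
  set l := (∑ i, u₀ i • L i).charpoly.roots.toList with hl
  have hlen : l.length = N := by rw [hl, Multiset.length_toList, hroots_card]
  have hlnd : l.Nodup := by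
    rw [hl, ← Multiset.coe_nodup, Multiset.coe_toList]
    exact hnodup
  set lam : Fin N → k := fun j => l.get (Fin.cast hlen.symm j) with hlam
  have hinj : Function.Injective lam := by
    intro p q hpq
    have h2 := List.nodup_iff_injective_get.mp hlnd hpq
    have h3 : (p : ℕ) = q := by simpa using congrArg Fin.val h2
    exact Fin.ext h3
  have hlam_root : ∀ j, (∑ i, u₀ i • L i).charpoly.IsRoot (lam j) := by
    intro j
    apply Polynomial.isRoot_of_mem_roots
    have h1 : lam j ∈ l := List.get_mem l _
    rwa [Multiset.mem_toList] at h1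
  have hlam_rootB : ∀ j, (∑ i, u₀ i • M i).charpoly.IsRoot (lam j) := by
    intro j
    rw [← hchar]
    exact hlam_root j
  obtain ⟨V, c, hVdet, hVrel, hVlam⟩ := aux_pencil_diag hN L hL u₀ lam hinj
    (fun j => aux_exists_eigenvector (hlam_root j))
  obtain ⟨W, d, hWdet, hWrel, hWlam⟩ := aux_pencil_diag hN M hM u₀ lam hinj
    (fun j => aux_exists_eigenvector (hlam_rootB j))
  have hform : ∀ (Lf : Fin r → Matrix (Fin N) (Fin N) k) (Vf : Matrix (Fin N) (Fin N) k)
      (cf : Fin r → Fin N → k), IsUnit Vf.det →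
      (∀ i, Lf i * Vf = Vf * Matrix.diagonal (cf i)) →
      ∀ u : Fin r → k, (∑ i, u i • Lf i).charpoly = ∏ j, (X - C (∑ i, u i * cf i j)) := by
    intro Lf Vf cf hdet hrel u
    have hmul : (∑ i, u i • Lf i) * Vf
        = Vf * Matrix.diagonal (fun j => ∑ i, u i * cf i j) := by
      rw [Finset.sum_mul,
        Finset.sum_congr rfl (fun i (_ : i ∈ Finset.univ) => by
          rw [Matrix.smul_mul, hrel i, ← Matrix.mul_smul]),
        ← Finset.mul_sum]
      congr 1
      ext p q
      rcases eq_or_ne p q with h | h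
      · subst h
        simp [Matrix.sum_apply]
      · simp [Matrix.sum_apply, Matrix.diagonal_apply_ne _ h, h]
    rw [aux_charpoly_similar hdet hmul, aux_charpoly_diagonal]
  have hcdeq : ∀ u : Fin r → k,
      (∏ j, (X - C (∑ i, u i * c i j))) = ∏ j, (X - C (∑ i, u i * d i j)) := by
    intro u
    rw [← hform L V c hVdet hVrel u, ← hform M W d hWdet hWrel u]
    exact hiso u
  have hcd : c = d := aux_compare u₀ lam hinj c d hVlam hWlam hcdeq
  refine ⟨W * V⁻¹, ?_, ?_⟩
  · have h1 : IsUnit W := (Matrix.isUnit_iff_isUnit_det W).mpr hWdet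
    have h2 : IsUnit (V⁻¹ : Matrix (Fin N) (Fin N) k) :=
      (Matrix.isUnit_iff_isUnit_det _).mpr (Matrix.isUnit_nonsing_inv_det V hVdet)
    exact h1.mul h2
  · intro i
    have hLi : L i = V * Matrix.diagonal (c i) * V⁻¹ := by
      rw [← hVrel i, Matrix.mul_assoc, Matrix.mul_nonsing_inv _ hVdet, Matrix.mul_one]
    have hMi : M i = W * Matrix.diagonal (d i) * W⁻¹ := by
      rw [← hWrel i, Matrix.mul_assoc, Matrix.mul_nonsing_inv _ hWdet, Matrix.mul_one]
    rw [Matrix.mul_inv_rev, Matrix.nonsing_inv_nonsing_inv _ hVdet, hLi, hMi, ← hcd]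
    simp only [Matrix.mul_assoc]
    rw [Matrix.nonsing_inv_mul_cancel_left _ _ hVdet,
      Matrix.nonsing_inv_mul_cancel_left _ _ hVdet]
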